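/- For n ≥ 2 and k ≥ 2, the de Bruijn graph B(n,k) contains a Hamiltonian cycle. -/

import Mathlib

/-- Words of length `n` over a `k`-letter alphabet (letters are `Fin k`). -/
abbrev Word (n k : ℕ) := Fin n → Fin k

/-- De Bruijn adjacency: there is an edge `x₁x₂⋯xₙ → x₂⋯xₙx_{n+1}`,
i.e. `v` is obtained from `u` by shifting one position to the left. -/
def dbAdj {n k : ℕ} (u v : Word n k) : Prop :=
  ∀ (i : ℕ) (h : i + 1 < n), v ⟨i, by omega⟩ = u ⟨i + 1, h⟩

open List Finset

section Euler

variable {E V : Type*} [DecidableEq E] [DecidableEq V]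
variable (tl hd : E → V)

def GStep (u v : V) : Prop := ∃ e, tl e = u ∧ hd e = v

def Adj (a b : E) : Prop := hd a = tl b

variable {tl hd}

omit [DecidableEq E] [DecidableEq V] in
lemma map_tl_of_chain' : ∀ (l : List E) (h : l ≠ []), l.Chain' (Adj tl hd) →
    l.map tl = tl (l.head h) :: (l.map hd).dropLast := by
  intro l
  induction l with
  | nil => simp
  | cons a t ih =>
    intro _ hc
    cases t with
    | nil => simp
    | cons b s =>
      change List.IsChain _ _ at hc
      rw [List.isChain_cons_cons] at hc
      have h2 : (b :: s) ≠ [] := by simp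
      have := ih h2 hc.2
      simp only [List.map_cons, List.head_cons] at this ⊢
      rw [this]
      have hd2 : (hd b :: List.map hd s) ≠ [] := by simp
      rw [List.dropLast_cons_of_ne_nil hd2]
      simp [hc.1.symm]

omit [DecidableEq E] [DecidableEq V] in
lemma map_hd_split (l : List E) (h : l ≠ []) :
    l.map hd = (l.map hd).dropLast ++ [hd (l.getLast h)] := by
  have h2 : l.map hd ≠ [] := by simpa using h
  conv_lhs => rw [← List.dropLast_append_getLast h2]
  rw [List.getLast_map]

/-- count of tails for an open trail -/
lemma count_tl_open {l : List E} (h : l ≠ []) (hc : l.Chain' (Adj tl hd)) (v : V) :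
    (l.map tl : Multiset V).count v
      = (if tl (l.head h) = v then 1 else 0) + ((l.map hd).dropLast : Multiset V).count v := by
  rw [map_tl_of_chain' l h hc]
  rw [show ((tl (l.head h) :: (l.map hd).dropLast : List V) : Multiset V)
      = tl (l.head h) ::ₘ ((l.map hd).dropLast : Multiset V) from rfl]
  rw [Multiset.count_cons]
  split <;> split <;> simp_all <;> omega

lemma count_hd_open {l : List E} (h : l ≠ []) (v : V) :
    (l.map hd : Multiset V).count v
      = (if hd (l.getLast h) = v then 1 else 0) + ((l.map hd).dropLast : Multiset V).count v := by
  conv_lhs => rw [map_hd_split l h]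
  rw [show (((l.map hd).dropLast ++ [hd (l.getLast h)] : List V) : Multiset V)
      = ((l.map hd).dropLast : Multiset V) + ([hd (l.getLast h)] : Multiset V) from rfl]
  rw [Multiset.count_add]
  have : (([hd (l.getLast h)] : List V) : Multiset V).count v
      = if hd (l.getLast h) = v then 1 else 0 := by
    rw [show (([hd (l.getLast h)] : List V) : Multiset V) = {hd (l.getLast h)} from rfl,
      Multiset.count_singleton]
    split <;> split <;> simp_all
  rw [this]; omega

/-- for a closed trail, tail counts equal head counts -/
lemma count_closed {l : List E} (h : l ≠ []) (hc : l.Chain' (Adj tl hd))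
    (hcl : hd (l.getLast h) = tl (l.head h)) (v : V) :
    (l.map tl : Multiset V).count v = (l.map hd : Multiset V).count v := by
  rw [count_tl_open h hc v, count_hd_open h v, hcl]

/-- Closed trail predicate (for nonempty lists). -/
def IsCT (tl hd : E → V) (l : List E) : Prop :=
  l.Nodup ∧ l.Chain' (Adj tl hd) ∧ ∀ a ∈ l.head?, ∀ b ∈ l.getLast?, hd b = tl a

/-- balance of a collection of edges -/
def Bal (tl hd : E → V) (R : Finset E) : Prop :=
  ∀ v, ((R.val.map tl)).count v = ((R.val.map hd)).count v

lemma coe_le_of_subset {l : List E} (hnd : l.Nodup) {R : Finset E}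
    (hsub : l.toFinset ⊆ R) : (l : Multiset E) ≤ R.val := by
  rw [Multiset.le_iff_subset (Multiset.coe_nodup.2 hnd)]
  intro e he
  have : e ∈ l.toFinset := by simpa using he
  exact hsub this

/-- A maximal trail in a balanced edge set is closed. -/
lemma maximal_closed {R : Finset E} (bal : Bal tl hd R) {l : List E} (h : l ≠ [])
    (hnd : l.Nodup) (hc : l.Chain' (Adj tl hd)) (hsub : l.toFinset ⊆ R)
    (hmax : ∀ e ∈ R, e ∉ l → tl e ≠ hd (l.getLast h)) :
    hd (l.getLast h) = tl (l.head h) := by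
  by_contra hne
  set w := hd (l.getLast h) with hw
  have hle : (l : Multiset E) ≤ R.val := coe_le_of_subset hnd hsub
  have hle' : ((l.map hd : List V) : Multiset V) ≤ R.val.map hd := by
    rw [show ((l.map hd : List V) : Multiset V) = (l : Multiset E).map hd from rfl]
    exact Multiset.map_le_map hle
  have c1 : ((l.map hd : List V) : Multiset V).count w
      = ((l.map hd).dropLast : Multiset V).count w + 1 := by
    rw [count_hd_open h w, if_pos rfl]; omega
  have c2 : ((l.map tl : List V) : Multiset V).count w
      = ((l.map hd).dropLast : Multiset V).count w := by
    rw [count_tl_open h hc w, if_neg (fun hh => hne hh.symm)]; omega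
  have c3 : ((l.map hd : List V) : Multiset V).count w ≤ (R.val.map hd).count w :=
    Multiset.count_le_of_le w hle'
  have c4 : (R.val.map tl).count w = (R.val.map hd).count w := bal w
  -- find an unused edge with tail w
  set M : Multiset E := R.val - (l : Multiset E) with hM
  have hsplit : (l : Multiset E) + M = R.val := by
    rw [hM]; exact add_tsub_cancel_of_le hle
  have hmapsplit : (R.val.map tl) = ((l.map tl : List V) : Multiset V) + M.map tl := by
    rw [← hsplit, Multiset.map_add]; rfl
  have c5 : (M.map tl).count w
      = (R.val.map tl).count w - ((l.map tl : List V) : Multiset V).count w := by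
    rw [hmapsplit, Multiset.count_add]; omega
  have c6 : 0 < (M.map tl).count w := by
    rw [c5, c4]; omega
  obtain ⟨e, heM, hetl⟩ := Multiset.mem_map.1 (Multiset.count_pos.1 c6)
  have heR : e ∈ R := by
    have : 0 < M.count e := Multiset.count_pos.2 heM
    rw [hM, Multiset.count_sub] at this
    have : 0 < R.val.count e := by omega
    exact Multiset.count_pos.1 this
  have henl : e ∉ l := by
    have h1 : 0 < M.count e := Multiset.count_pos.2 heM
    rw [hM, Multiset.count_sub] at h1
    have h2 : R.val.count e ≤ 1 := Multiset.nodup_iff_count_le_one.1 R.nodup e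
    intro hmem
    have h3 : 1 ≤ (l : Multiset E).count e := Multiset.one_le_count_iff_mem.2 hmem
    omega
  exact hmax e heR henl hetl

/-- Grow a trail inside `R` until no extension is possible. -/
lemma grow (R : Finset E) : ∀ (fuel : ℕ) (t : List E), t ≠ [] →
    t.Nodup → t.Chain' (Adj tl hd) → t.toFinset ⊆ R → R.card - t.length ≤ fuel →
    ∃ t', t' ≠ [] ∧ t'.Nodup ∧ t'.Chain' (Adj tl hd) ∧ t'.toFinset ⊆ R ∧
      t'.head? = t.head? ∧
      ∀ e ∈ R, e ∉ t' → ∀ b ∈ t'.getLast?, tl e ≠ hd b := by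
  intro fuel
  induction fuel with
  | zero =>
    intro t ht hnd hc hsub hfuel
    refine ⟨t, ht, hnd, hc, hsub, rfl, ?_⟩
    intro e heR hent b hb _
    -- t occupies all of R already: contradiction with e ∈ R \ t
    have hlen : t.length = t.toFinset.card := (List.toFinset_card_of_nodup hnd).symm
    have hstrict : t.toFinset ⊂ R := by
      refine ⟨hsub, fun hsub2 => hent ?_⟩
      simpa using hsub2 heR
    have := Finset.card_lt_card hstrict
    omega
  | succ n ih =>
    intro t ht hnd hc hsub hfuel
    by_cases hext : ∃ e ∈ R, e ∉ t ∧ tl e = hd (t.getLast ht)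
    · obtain ⟨e, heR, hent, hetl⟩ := hext
      have hne2 : (t ++ [e]) ≠ [] := by simp
      have hnd2 : (t ++ [e]).Nodup := by
        rw [List.nodup_append]
        exact ⟨hnd, by simp, by intro x hx y hy; simp at hy; subst hy; exact fun hxe => hent (hxe ▸ hx)⟩
      have hc2 : (t ++ [e]).Chain' (Adj tl hd) := by
        show List.IsChain _ _
        rw [List.isChain_append]
        refine ⟨hc, by simp, ?_⟩
        intro x hx y hy
        rw [List.getLast?_eq_getLast ht] at hx
        simp at hx hy
        subst hx; subst hy
        exact hetl.symm
      have hsub2 : (t ++ [e]).toFinset ⊆ R := by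
        simp only [List.toFinset_append]
        intro x hx
        rcases Finset.mem_union.1 hx with h1 | h1
        · exact hsub h1
        · simp at h1; subst h1; exact heR
      have hfuel2 : R.card - (t ++ [e]).length ≤ n := by
        simp only [List.length_append, List.length_singleton]
        omega
      obtain ⟨t', a1, a2, a3, a4, a5, a6⟩ := ih (t ++ [e]) hne2 hnd2 hc2 hsub2 hfuel2
      refine ⟨t', a1, a2, a3, a4, ?_, a6⟩
      rw [a5, List.head?_append_of_ne_nil t ht]
    · refine ⟨t, ht, hnd, hc, hsub, rfl, ?_⟩
      intro e heR hent b hb htl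
      rw [List.getLast?_eq_getLast ht] at hb
      simp at hb; subst hb
      exact hext ⟨e, heR, hent, htl⟩

lemma ct_rotate_one {l : List E} (hct : IsCT tl hd l) : IsCT tl hd (l.rotate 1) := by
  obtain ⟨hnd, hc, hcl⟩ := hct
  cases l with
  | nil => simp [IsCT, List.Chain']
  | cons a t =>
    cases t with
    | nil =>
      rw [show [a].rotate 1 = [a] from by simp]
      exact ⟨hnd, hc, hcl⟩
    | cons b s =>
      have hrot : (a :: b :: s).rotate 1 = (b :: s) ++ [a] := by
        simp [List.rotate_cons_succ]
      rw [hrot]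
      have hbs : (b :: s) ≠ [] := by simp
      change List.IsChain _ _ at hc
      rw [List.isChain_cons_cons] at hc
      have hnd' := List.nodup_cons.1 hnd
      have hlast : hd ((a :: b :: s).getLast (by simp)) = tl a := by
        apply hcl a (by simp)
        rw [List.getLast?_eq_getLast (by simp)]
        rfl
      constructor
      · rw [List.nodup_append]
        refine ⟨hnd'.2, by simp, ?_⟩
        intro x hx y hy
        simp only [List.mem_singleton] at hy; subst hy
        intro hxa; subst hxa; exact hnd'.1 hx
      constructor
      · show List.IsChain _ _
        rw [List.isChain_append]
        refine ⟨hc.2, by simp, ?_⟩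
        intro x hx y hy
        simp at hy; subst hy
        rw [List.getLast?_eq_getLast hbs] at hx
        simp at hx; subst hx
        show hd _ = tl a
        rw [show (a :: b :: s).getLast (by simp) = (b :: s).getLast hbs from
          List.getLast_cons hbs] at hlast
        exact hlast
      · intro x hx y hy
        rw [List.head?_append_of_ne_nil _ hbs] at hx
        simp at hx; subst hx
        rw [List.getLast?_append] at hy
        simp at hy; subst hy
        exact hc.1

lemma ct_rotate {l : List E} (hct : IsCT tl hd l) (n : ℕ) : IsCT tl hd (l.rotate n) := by
  induction n with
  | zero => simpa using hct
  | succ m ih =>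
    have : l.rotate (m + 1) = (l.rotate m).rotate 1 := by
      rw [List.rotate_rotate]
    rw [this]
    exact ct_rotate_one ih


lemma closure_of_ct {l : List E} (h : l ≠ []) (hct : IsCT tl hd l) :
    hd (l.getLast h) = tl (l.head h) := by
  refine hct.2.2 (l.head h) ?_ (l.getLast h) ?_
  · rw [List.head?_eq_head h]; rfl
  · rw [List.getLast?_eq_getLast h]; rfl

lemma crossing (conn : ∀ u v, Relation.ReflTransGen (GStep tl hd) u v)
    {l : List E} (h : l ≠ []) {e : E} (he : e ∉ l.toFinset) :
    ∃ f, f ∉ l.toFinset ∧ ∃ a ∈ l, hd a = tl f := by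
  have key : ∀ v, Relation.ReflTransGen (GStep tl hd) (hd (l.getLast h)) v →
      (∃ a ∈ l, hd a = v) ∨ (∃ f, f ∉ l.toFinset ∧ ∃ a ∈ l, hd a = tl f) := by
    intro v hv
    induction hv with
    | refl => exact Or.inl ⟨l.getLast h, List.getLast_mem h, rfl⟩
    | tail _ hbc ih =>
      rcases ih with (⟨a, ha, hha⟩ | q)
      · obtain ⟨g, hg1, hg2⟩ := hbc
        by_cases hgl : g ∈ l.toFinset
        · exact Or.inl ⟨g, by simpa using hgl, hg2⟩
        · exact Or.inr ⟨g, hgl, a, ha, by rw [hg1, hha]⟩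
      · exact Or.inr q
  rcases key (tl e) (conn _ _) with (⟨a, ha, hha⟩ | q)
  · exact ⟨e, he, a, ha, hha⟩
  · exact q

lemma bal_sdiff [Fintype E] (bal : Bal tl hd Finset.univ) {l : List E} (h : l ≠ [])
    (hct : IsCT tl hd l) : Bal tl hd (Finset.univ \ l.toFinset) := by
  intro v
  have hnd := hct.1
  have hle : (l : Multiset E) ≤ (Finset.univ : Finset E).val :=
    coe_le_of_subset hnd (Finset.subset_univ _)
  have hval : (Finset.univ \ l.toFinset).val
      = (Finset.univ : Finset E).val - (l : Multiset E) := by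
    rw [Finset.sdiff_val]
    congr 1
    rw [show l.toFinset.val = ((l.dedup : List E) : Multiset E) from rfl, hnd.dedup]
  have hsplit : (l : Multiset E) + ((Finset.univ : Finset E).val - (l : Multiset E))
      = (Finset.univ : Finset E).val := add_tsub_cancel_of_le hle
  have key : ∀ (g : E → V),
      (((Finset.univ \ l.toFinset).val).map g).count v
        = (((Finset.univ : Finset E).val).map g).count v
          - ((l.map g : List V) : Multiset V).count v := by
    intro g
    have hmap : ((Finset.univ : Finset E).val.map g)
        = ((l.map g : List V) : Multiset V)
          + ((Finset.univ : Finset E).val - (l : Multiset E)).map g := by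
      conv_lhs => rw [← hsplit]
      rw [Multiset.map_add]
      rfl
    rw [hval, hmap, Multiset.count_add]
    omega
  rw [key tl, key hd, bal v,
    count_closed h hct.2.1 (closure_of_ct h hct) v]

lemma merge [Fintype E] (bal : Bal tl hd Finset.univ)
    (conn : ∀ u v, Relation.ReflTransGen (GStep tl hd) u v) :
    ∀ (fuel : ℕ) (l : List E), l ≠ [] → IsCT tl hd l →
      Fintype.card E - l.length ≤ fuel →
      ∃ L, L ≠ [] ∧ IsCT tl hd L ∧ L.toFinset = Finset.univ := by
  intro fuel
  induction fuel with
  | zero =>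
    intro l h hct hfuel
    refine ⟨l, h, hct, ?_⟩
    have h1 : l.toFinset.card = l.length := List.toFinset_card_of_nodup hct.1
    have h2 : l.toFinset.card ≤ Fintype.card E := by
      simpa using Finset.card_le_card (Finset.subset_univ l.toFinset)
    apply Finset.eq_univ_of_card
    omega
  | succ n ih =>
    intro l h hct hfuel
    by_cases huniv : l.toFinset = Finset.univ
    · exact ⟨l, h, hct, huniv⟩
    have hex : ∃ e, e ∉ l.toFinset := by
      by_contra h'
      push_neg at h'
      exact huniv (Finset.eq_univ_iff_forall.2 h')
    obtain ⟨e, he⟩ := hex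
    obtain ⟨f, hf, a, ha, hhaf⟩ := crossing conn h he
    obtain ⟨p, q, hl⟩ := List.append_of_mem ha
    -- rotate l so that `a` becomes last
    set l₁ := l.rotate (p.length + 1) with hl₁
    have hct₁ : IsCT tl hd l₁ := ct_rotate hct _
    have hlen₁ : l₁.length = l.length := List.length_rotate l _
    have hne₁ : l₁ ≠ [] := by
      intro hcon
      apply h
      rw [← List.length_eq_zero_iff] at hcon ⊢
      omega
    have hplen : p.length + 1 ≤ l.length := by
      rw [hl]
      simp only [List.length_append, List.length_cons]
      omega
    have hlrot : l₁ = q ++ (p ++ [a]) := by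
      rw [hl₁, List.rotate_eq_drop_append_take hplen, hl]
      rw [List.drop_append, List.take_append]
      simp [List.drop_eq_nil_of_le (show p.length ≤ p.length + 1 by omega),
        List.take_of_length_le (show p.length ≤ p.length + 1 by omega)]
    have hlast? : l₁.getLast? = some a := by
      rw [hlrot, ← List.append_assoc, List.getLast?_concat]
    have hlast₁ : l₁.getLast hne₁ = a := by
      rw [List.getLast?_eq_getLast hne₁] at hlast?
      exact Option.some.inj hlast?
    have hfin₁ : l₁.toFinset = l.toFinset := by
      ext x
      simp [hl₁, List.mem_rotate]
    have wkey : tl (l₁.head hne₁) = hd a := by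
      rw [← hlast₁]
      exact (closure_of_ct hne₁ hct₁).symm
    -- grow a maximal trail from f in the unused edges
    set R := Finset.univ \ l.toFinset with hR
    have balR : Bal tl hd R := bal_sdiff bal h hct
    have hfR : f ∈ R := Finset.mem_sdiff.2 ⟨Finset.mem_univ _, hf⟩
    obtain ⟨t, ht, tnd, tc, tsub, thead, tmax⟩ :=
      grow (tl := tl) (hd := hd) R R.card [f] (by simp) (by simp) (List.isChain_singleton _) (by simpa using hfR) (by omega)
    have hheadf : t.head ht = f := by
      have h9 : some (t.head ht) = some f :=
        (List.head?_eq_head ht).symm.trans (by simpa using thead)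
      exact Option.some.inj h9
    have tclose : hd (t.getLast ht) = tl (t.head ht) := by
      apply maximal_closed balR ht tnd tc tsub
      intro e' he'R he'nt
      exact tmax e' he'R he'nt (t.getLast ht) (by rw [List.getLast?_eq_getLast ht]; rfl)
    have tlastw : hd (t.getLast ht) = tl f := by rw [tclose, hheadf]
    -- combine
    set L := t ++ l₁ with hLdef
    have hLne : L ≠ [] := by simp [hLdef, ht]
    have hdisj : ∀ x ∈ t, x ∉ l₁ := by
      intro x hx hxl₁
      have hxR : x ∈ R := tsub (List.mem_toFinset.2 hx)
      have : x ∉ l.toFinset := (Finset.mem_sdiff.1 hxR).2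
      apply this
      rw [← hfin₁]
      exact List.mem_toFinset.2 hxl₁
    have hLnd : L.Nodup := by
      rw [hLdef, List.nodup_append]
      exact ⟨tnd, hct₁.1, fun x hx y hy hxy => hdisj x hx (hxy ▸ hy)⟩
    have hLc : L.Chain' (Adj tl hd) := by
      rw [hLdef]
      show List.IsChain _ _
      rw [List.isChain_append]
      refine ⟨tc, hct₁.2.1, ?_⟩
      intro x hx y hy
      rw [List.getLast?_eq_getLast ht] at hx
      rw [List.head?_eq_head hne₁] at hy
      simp at hx hy
      subst hx; subst hy
      show hd _ = tl _
      rw [tlastw, wkey, hhaf]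
    have hLcl : ∀ x ∈ L.head?, ∀ y ∈ L.getLast?, hd y = tl x := by
      intro x hx y hy
      rw [hLdef, List.head?_append_of_ne_nil _ ht, List.head?_eq_head ht] at hx
      rw [hLdef, List.getLast?_append, List.getLast?_eq_getLast hne₁] at hy
      simp at hx hy
      subst hx; subst hy
      rw [hlast₁, hhaf, hheadf]
    have hLlen : l.length < L.length := by
      rw [hLdef]
      simp only [List.length_append]
      have : 1 ≤ t.length := by
        cases t with
        | nil => exact absurd rfl ht
        | cons _ _ => simp
      omega
    exact ih L hLne ⟨hLnd, hLc, hLcl⟩ (by omega)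

theorem euler_exists [Fintype E] [Nonempty E] (bal : Bal tl hd Finset.univ)
    (conn : ∀ u v, Relation.ReflTransGen (GStep tl hd) u v) :
    ∃ L : List E, L ≠ [] ∧ IsCT tl hd L ∧ L.toFinset = Finset.univ := by
  obtain ⟨e₀⟩ := ‹Nonempty E›
  obtain ⟨t, ht, tnd, tc, tsub, thead, tmax⟩ :=
    grow (tl := tl) (hd := hd) Finset.univ (Finset.univ.card) [e₀] (by simp) (by simp) (List.isChain_singleton _)
      (by simp) (by omega)
  have tclose : hd (t.getLast ht) = tl (t.head ht) := by
    apply maximal_closed bal ht tnd tc tsub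
    intro e' he'R he'nt
    exact tmax e' he'R he'nt (t.getLast ht) (by rw [List.getLast?_eq_getLast ht]; rfl)
  have hct : IsCT tl hd t := by
    refine ⟨tnd, tc, ?_⟩
    intro x hx y hy
    rw [List.head?_eq_head ht] at hx
    rw [List.getLast?_eq_getLast ht] at hy
    simp at hx hy
    subst hx; subst hy
    exact tclose
  exact merge bal conn (Fintype.card E) t ht hct (by omega)

end Euler


section DB

variable {n k : ℕ}

/-- first `n-1` letters -/
def tlW (u : Word n k) : Fin (n - 1) → Fin k :=
  fun i => u ⟨i.val, by have := i.isLt; omega⟩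

/-- last `n-1` letters -/
def hdW (u : Word n k) : Fin (n - 1) → Fin k :=
  fun i => u ⟨i.val + 1, by have := i.isLt; omega⟩

lemma adj_to_db {u v : Word n k} (h : hdW u = tlW v) : dbAdj u v := by
  intro i hi
  have := congrFun h ⟨i, by omega⟩
  simp only [hdW, tlW] at this
  exact this.symm

lemma db_count_eq (hn : 2 ≤ n) (w : Fin (n - 1) → Fin k) :
    ((Finset.univ : Finset (Word n k)).val.map tlW).count w
      = ((Finset.univ : Finset (Word n k)).val.map hdW).count w := by
  rw [Multiset.count_map, Multiset.count_map]
  have h1 : Multiset.card (Multiset.filter (fun e => w = tlW e)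
        (Finset.univ : Finset (Word n k)).val)
      = ((Finset.univ : Finset (Word n k)).filter (fun e => w = tlW e)).card := rfl
  have h2 : Multiset.card (Multiset.filter (fun e => w = hdW e)
        (Finset.univ : Finset (Word n k)).val)
      = ((Finset.univ : Finset (Word n k)).filter (fun e => w = hdW e)).card := rfl
  rw [h1, h2]
  have hcard1 : ((Finset.univ : Finset (Word n k)).filter (fun e => w = tlW e)).card
      = Fintype.card (Fin k) := by
    rw [← Finset.card_univ]
    refine Finset.card_bij' (fun e _ => e ⟨n - 1, by omega⟩)
      (fun a _ => fun t : Fin n => if h : t.val < n - 1 then w ⟨t.val, h⟩ else a) ?_ ?_ ?_ ?_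
    · intro e _; exact Finset.mem_univ _
    · intro a _
      rw [Finset.mem_filter]
      refine ⟨Finset.mem_univ _, ?_⟩
      funext i
      simp only [tlW]
      rw [dif_pos i.isLt]
    · intro e he
      rw [Finset.mem_filter] at he
      funext t
      by_cases h : t.val < n - 1
      · rw [dif_pos h]
        have := congrFun he.2 ⟨t.val, h⟩
        simp only [tlW] at this
        rw [this]
      · rw [dif_neg h]
        congr 1
        have ht2 := t.isLt
        exact Fin.ext (by rw [Fin.val_mk]; omega)
    · intro a _
      exact dif_neg (Nat.lt_irrefl _)
  have hcard2 : ((Finset.univ : Finset (Word n k)).filter (fun e => w = hdW e)).card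
      = Fintype.card (Fin k) := by
    rw [← Finset.card_univ]
    refine Finset.card_bij' (fun e _ => e ⟨0, by omega⟩)
      (fun a _ => fun t : Fin n => if h : 0 < t.val then w ⟨t.val - 1, by have := t.isLt; omega⟩ else a) ?_ ?_ ?_ ?_
    · intro e _; exact Finset.mem_univ _
    · intro a _
      rw [Finset.mem_filter]
      refine ⟨Finset.mem_univ _, ?_⟩
      funext i
      simp only [hdW]
      rw [dif_pos (by omega)]
      rfl
    · intro e he
      rw [Finset.mem_filter] at he
      funext t
      by_cases h : 0 < t.val
      · rw [dif_pos h]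
        have := congrFun he.2 ⟨t.val - 1, by have := t.isLt; omega⟩
        simp only [hdW] at this
        rw [this]
        congr 1
        exact Fin.ext (by simp; omega)
      · rw [dif_neg h]
        congr 1
        exact Fin.ext (by rw [Fin.val_mk]; omega)
    · intro a _
      exact dif_neg (Nat.lt_irrefl 0)
  rw [hcard1, hcard2]

lemma db_conn (hn : 2 ≤ n) (hk : 1 ≤ k) (u v : Fin (n - 1) → Fin k) :
    Relation.ReflTransGen (GStep (tlW (n := n) (k := k)) hdW) u v := by
  have hm1 : 1 ≤ n - 1 := by omega
  set F : ℕ → Fin k := fun t =>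
    if h : t < n - 1 then u ⟨t, h⟩
    else if h2 : t - (n - 1) < n - 1 then v ⟨t - (n - 1), h2⟩ else v ⟨0, hm1⟩
    with hF
  set win : ℕ → (Fin (n - 1) → Fin k) := fun s i => F (s + i.val) with hwin
  have hwin0 : win 0 = u := by
    funext i
    simp only [hwin, hF, Nat.zero_add]
    rw [dif_pos i.isLt]
  have hwinm : win (n - 1) = v := by
    funext i
    simp only [hwin, hF]
    rw [dif_neg (by omega), dif_pos (by have := i.isLt; omega)]
    congr 1
    exact Fin.ext (by simp)
  have hstep : ∀ s : ℕ, GStep (tlW (n := n) (k := k)) hdW (win s) (win (s + 1)) := by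
    intro s
    refine ⟨fun i : Fin n => F (s + i.val), ?_, ?_⟩
    · funext i
      simp only [tlW, hwin]
    · funext i
      simp only [hdW, hwin]
      congr 1
      omega
  have hreach : ∀ s : ℕ,
      Relation.ReflTransGen (GStep (tlW (n := n) (k := k)) hdW) (win 0) (win s) := by
    intro s
    induction s with
    | zero => exact Relation.ReflTransGen.refl
    | succ r ih => exact Relation.ReflTransGen.tail ih (hstep r)
  have := hreach (n - 1)
  rw [hwin0, hwinm] at this
  exact this

end DB


/-- For `n ≥ 2` and `k ≥ 2`, the de Bruijn graph `B(n,k)` contains a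
Hamiltonian cycle: a cyclic arrangement of all `k ^ n` words in which consecutive
words are joined by a de Bruijn edge. -/
theorem deBruijn_hamiltonian (n k : ℕ) (hn : 2 ≤ n) (hk : 2 ≤ k) :
    ∃ c : Fin (k ^ n) → Word n k, Function.Bijective c ∧
      ∀ i : Fin (k ^ n), dbAdj (c i) (c ⟨((i : ℕ) + 1) % k ^ n, Nat.mod_lt _ i.pos⟩) := by
  have hNE : Nonempty (Word n k) := ⟨fun _ => ⟨0, by omega⟩⟩
  obtain ⟨L, hLne, ⟨hLnd, hLc, hLcl⟩, hLuniv⟩ :=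
    euler_exists (tl := tlW (n := n) (k := k)) (hd := hdW) (db_count_eq hn) (db_conn hn (by omega))
  have hcardW : Fintype.card (Word n k) = k ^ n := by
    rw [Fintype.card_fun]
    simp
  have hlen : L.length = k ^ n := by
    rw [← List.toFinset_card_of_nodup hLnd, hLuniv, Finset.card_univ, hcardW]
  refine ⟨fun i => L.get ⟨i.val, by rw [hlen]; exact i.isLt⟩, ?_, ?_⟩
  · rw [Fintype.bijective_iff_injective_and_card]
    constructor
    · intro a b hab
      have hinj := List.nodup_iff_injective_get.1 hLnd hab
      exact Fin.ext (by simpa using congrArg Fin.val hinj)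
    · simp [hcardW]
  · intro i
    dsimp only
    have hiN := i.isLt
    by_cases hlt : i.val + 1 < k ^ n
    · have hmod : (i.val + 1) % k ^ n = i.val + 1 := Nat.mod_eq_of_lt hlt
      apply adj_to_db
      have := List.isChain_iff_getElem.1 hLc i.val (by omega)
      simp only [hmod]
      exact this
    · have hieq : i.val + 1 = k ^ n := by omega
      have hmod : (i.val + 1) % k ^ n = 0 := by rw [hieq, Nat.mod_self]
      apply adj_to_db
      have hclose := closure_of_ct hLne ⟨hLnd, hLc, hLcl⟩
      have hLlast : L.get ⟨i.val, by rw [hlen]; exact hiN⟩ = L.getLast hLne := by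
        simp only [List.get_eq_getElem, List.getLast_eq_getElem]
        congr 1
        omega
      have hLhead : L.get ⟨(i.val + 1) % k ^ n, by rw [hlen]; exact Nat.mod_lt _ i.pos⟩
          = L.head hLne := by
        rw [← List.get_mk_zero (by rw [hlen]; omega)]
        congr 1
        exact Fin.ext (by simp [hmod])
      rw [hLlast, hLhead]
      exact hclose
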